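/- If q is a real number with 0 < q < 1, then (1-q) · Σ_{k≥3} ((k-2)/k) · q^{k-1} = 2 - q + 2·((1-q)/q)·ln(1-q). -/

import Mathlib

theorem stmt14 (q : ℝ) (h0 : 0 < q) (h1 : q < 1) :
    (1 - q) * ∑' k : ℕ, (((k : ℝ) + 3) - 2) / ((k : ℝ) + 3) * q ^ (k + 2) =
      2 - q + 2 * ((1 - q) / q) * Real.log (1 - q) := by
  have hq : q ≠ 0 := ne_of_gt h0
  have habs : |q| < 1 := abs_lt.2 ⟨by linarith, h1⟩
  have hgeo : HasSum (fun k : ℕ => q ^ (k + 2)) (q ^ 2 * (1 - q)⁻¹) := by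
    have := (hasSum_geometric_of_lt_one h0.le h1).mul_left (q ^ 2)
    simpa [pow_add, mul_comm, mul_left_comm] using this
  have hlog := Real.hasSum_pow_div_log_of_abs_lt_one habs
  have hlog2 : HasSum (fun k : ℕ => q ^ (k + 3) / ((k : ℝ) + 3))
      (-Real.log (1 - q) - (q + q ^ 2 / 2)) := by
    have h2 := (hasSum_nat_add_iff'
      (f := fun n : ℕ => q ^ (n + 1) / ((n : ℝ) + 1)) 2).2 hlog
    simp only [Finset.sum_range_succ, Finset.sum_range_zero] at h2
    convert h2 using 2 with k
    · rfl
    · push_cast; ring_nf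
    · norm_num
  have hmain : HasSum
      (fun k : ℕ => (((k : ℝ) + 3) - 2) / ((k : ℝ) + 3) * q ^ (k + 2))
      (q ^ 2 * (1 - q)⁻¹ - 2 * q⁻¹ * (-Real.log (1 - q) - (q + q ^ 2 / 2))) := by
    have h := hgeo.sub ((hlog2.mul_left q⁻¹).mul_left 2)
    have key : (fun k : ℕ => (((k : ℝ) + 3) - 2) / ((k : ℝ) + 3) * q ^ (k + 2)) =
        fun k : ℕ => q ^ (k + 2) - 2 * (q⁻¹ * (q ^ (k + 3) / ((k : ℝ) + 3))) := by
      funext k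
      have hk3 : ((k : ℝ) + 3) ≠ 0 := by positivity
      field_simp
      ring
    rw [key]
    convert h using 1
    · rfl
    · ring
  rw [hmain.tsum_eq]
  have hne : (1 : ℝ) - q ≠ 0 := by linarith
  field_simp
  ring
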